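/- If f, g are near-endomorphisms of ℤ, then λ(f ∘ g) = λ(f)·λ(g), where λ(h) = lim_{n→∞} h(n)/n. -/

import Mathlib

open Filter

lemma near_endo_linear_bound (f : ℤ → ℤ) (C : ℤ)
    (hC : ∀ a b : ℤ, |f (a + b) - f a - f b| ≤ C) (L : ℝ)
    (hL : Tendsto (fun n : ℕ => (f n : ℝ) / n) atTop (nhds L)) :
    ∀ k : ℤ, |(f k : ℝ) - L * k| ≤ 4 * C := by
  have h0 : |f 0| ≤ C := by have := hC 0 0; simpa using this
  have hC0 : (0:ℤ) ≤ C := le_trans (abs_nonneg _) h0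
  have hC0r : (0:ℝ) ≤ (C:ℝ) := by exact_mod_cast hC0
  -- multiplicative key bound
  have key : ∀ (m : ℕ) (n : ℤ), |f (m * n) - m * f n| ≤ (m + 1) * C := by
    intro m
    induction m with
    | zero => intro n; simpa using h0
    | succ m ih =>
      intro n
      have h1 := hC (m * n) n
      have h2 := ih n
      have hcast : ((m + 1 : ℕ) : ℤ) * n = (m : ℤ) * n + n := by push_cast; ring
      calc |f ((m + 1 : ℕ) * n) - ((m + 1 : ℕ) : ℤ) * f n|
          = |(f ((m:ℤ) * n + n) - f ((m:ℤ) * n) - f n) + (f ((m:ℤ) * n) - (m:ℤ) * f n)| := by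
            rw [hcast]; congr 1; push_cast; ring
        _ ≤ |f ((m:ℤ) * n + n) - f ((m:ℤ) * n) - f n| + |f ((m:ℤ) * n) - (m:ℤ) * f n| :=
            abs_add_le _ _
        _ ≤ C + ((m : ℤ) + 1) * C := add_le_add h1 h2
        _ ≤ (((m + 1 : ℕ) : ℤ) + 1) * C := by push_cast; nlinarith
  -- bound for positive naturals
  have hnat : ∀ n : ℕ, |(f n : ℝ) - L * n| ≤ 2 * C := by
    intro n
    rcases Nat.eq_zero_or_pos n with rfl | hn
    · simp only [Nat.cast_zero, mul_zero, sub_zero]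
      calc |((f 0 : ℤ) : ℝ)| ≤ (C : ℝ) := by exact_mod_cast h0
        _ ≤ 2 * C := by linarith
    have hnR : (0:ℝ) < (n:ℝ) := by exact_mod_cast hn
    -- subsequence along multiples of n
    have hmono : Tendsto (fun m : ℕ => m * n) atTop atTop :=
      tendsto_atTop_mono (fun m => Nat.le_mul_of_pos_right m hn) tendsto_id
    have hcomp : Tendsto (fun m : ℕ => (f (m * n : ℕ) : ℝ) / ((m * n : ℕ) : ℝ)) atTop (nhds L) :=
      hL.comp hmono
    have habs : ∀ m : ℕ, 1 ≤ m →
        |(f (m * n : ℕ) : ℝ) / ((m * n : ℕ) : ℝ) - (f n : ℝ) / n| ≤ 2 * C / n := by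
      intro m hm
      have hmR : (0:ℝ) < (m:ℝ) := by exact_mod_cast hm
      have hmnR : (0:ℝ) < ((m * n : ℕ) : ℝ) := by positivity
      have hint : |f ((m * n : ℕ) : ℤ) - (m : ℤ) * f n| ≤ 2 * m * C := by
        have := key m (n : ℤ)
        have hcast : ((m * n : ℕ) : ℤ) = (m : ℤ) * n := by push_cast; ring
        rw [hcast]
        calc |f ((m:ℤ) * n) - (m:ℤ) * f n| ≤ ((m:ℤ) + 1) * C := this
          _ ≤ 2 * m * C := by nlinarith [show (1:ℤ) ≤ (m:ℤ) from by exact_mod_cast hm]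
      have hintR : |((f ((m * n : ℕ) : ℤ) : ℝ)) - (m : ℝ) * (f n : ℝ)| ≤ 2 * m * C := by
        exact_mod_cast hint
      have heq : (f (m * n : ℕ) : ℝ) / ((m * n : ℕ) : ℝ) - (f n : ℝ) / n
          = ((f (m * n : ℕ) : ℝ) - (m : ℝ) * (f n : ℝ)) / ((m * n : ℕ) : ℝ) := by
        have : ((m * n : ℕ) : ℝ) = (m : ℝ) * n := by push_cast; ring
        rw [this]
        field_simp
      rw [heq, abs_div, abs_of_pos hmnR, div_le_div_iff₀ hmnR hnR]
      have : ((m * n : ℕ) : ℝ) = (m : ℝ) * n := by push_cast; ring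
      rw [this]
      nlinarith [hintR, hnR, hmR]
    have hlim : |L - (f n : ℝ) / n| ≤ 2 * C / n := by
      have ht : Tendsto (fun m : ℕ => |(f (m * n : ℕ) : ℝ) / ((m * n : ℕ) : ℝ) - (f n : ℝ) / n|)
          atTop (nhds |L - (f n : ℝ) / n|) := (hcomp.sub tendsto_const_nhds).abs
      exact le_of_tendsto ht (eventually_atTop.2 ⟨1, habs⟩)
    have : |(f n : ℝ) - L * n| = |L - (f n : ℝ) / n| * n := by
      rw [← abs_of_pos hnR, ← abs_mul]
      rw [abs_sub_comm]
      congr 1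
      field_simp
      rw [abs_of_pos hnR]; ring
    rw [this]
    calc |L - (f n : ℝ) / n| * n ≤ (2 * C / n) * n := by gcongr
      _ = 2 * C := by field_simp
  -- extend to all integers
  intro k
  obtain ⟨n, rfl | rfl⟩ := Int.eq_nat_or_neg k
  · calc |(f n : ℝ) - L * (n : ℤ)| = |(f n : ℝ) - L * n| := by norm_cast
      _ ≤ 2 * C := hnat n
      _ ≤ 4 * C := by linarith
  · have h1 : |f 0 - f n - f (-n)| ≤ C := by have := hC n (-n); simpa using this
    have h2 : |f (-(n:ℤ)) + f n| ≤ 2 * C := by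
      calc |f (-(n:ℤ)) + f n| = |f 0 - (f 0 - f n - f (-n))| := by ring_nf
        _ ≤ |f 0| + |f 0 - f n - f (-n)| := abs_sub _ _
        _ ≤ C + C := by gcongr <;> assumption
        _ = 2 * C := by ring
    have h2R : |((f (-(n:ℤ)) : ℝ)) + (f n : ℝ)| ≤ 2 * C := by exact_mod_cast h2
    have h3 := hnat n
    calc |(f (-(n:ℤ)) : ℝ) - L * (-(n:ℤ) : ℤ)|
        = |((f (-(n:ℤ)) : ℝ) + (f n : ℝ)) - ((f n : ℝ) - L * n)| := by push_cast; ring_nf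
      _ ≤ |(f (-(n:ℤ)) : ℝ) + (f n : ℝ)| + |(f n : ℝ) - L * n| := abs_sub _ _
      _ ≤ 2 * C + 2 * C := by gcongr
      _ = 4 * C := by ring

theorem near_endo_lambda_mul (f g : ℤ → ℤ)
    (hf : ∃ C : ℤ, ∀ a b : ℤ, |f (a + b) - f a - f b| ≤ C)
    (hg : ∃ C : ℤ, ∀ a b : ℤ, |g (a + b) - g a - g b| ≤ C)
    (L M : ℝ)
    (hL : Filter.Tendsto (fun n : ℕ => (f n : ℝ) / n) Filter.atTop (nhds L))
    (hM : Filter.Tendsto (fun n : ℕ => (g n : ℝ) / n) Filter.atTop (nhds M)) :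
    Filter.Tendsto (fun n : ℕ => ((f (g n) : ℝ)) / n) Filter.atTop (nhds (L * M)) := by
  obtain ⟨Cf, hCf⟩ := hf
  obtain ⟨Cg, hCg⟩ := hg
  have hfb := near_endo_linear_bound f Cf hCf L hL
  have hgb := near_endo_linear_bound g Cg hCg M hM
  set K : ℝ := 4 * Cf + |L| * (4 * Cg) with hK
  have hKnn : 0 ≤ K := by
    have h1 := hfb 0
    have h2 := hgb 0
    have : (0:ℝ) ≤ 4 * Cf := le_trans (abs_nonneg _) (by simpa using h1)
    have : (0:ℝ) ≤ 4 * Cg := le_trans (abs_nonneg _) (by simpa using h2)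
    positivity
  have hbound : ∀ n : ℕ, |(f (g n) : ℝ) - L * M * n| ≤ K := by
    intro n
    calc |(f (g n) : ℝ) - L * M * n|
        = |((f (g n) : ℝ) - L * (g n : ℤ)) + L * (((g n : ℤ) : ℝ) - M * n)| := by ring_nf
      _ ≤ |(f (g n) : ℝ) - L * (g n : ℤ)| + |L * (((g n : ℤ) : ℝ) - M * n)| := abs_add_le _ _
      _ ≤ 4 * Cf + |L| * (4 * Cg) := by
          rw [abs_mul]
          gcongr
          · exact hfb (g n)
          · exact hgb n
  have hzero : Filter.Tendsto (fun n : ℕ => ((f (g n) : ℝ) - L * M * n) / n)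
      Filter.atTop (nhds 0) := by
    apply squeeze_zero_norm (a := fun n : ℕ => K / n)
    · intro n
      rcases Nat.eq_zero_or_pos n with rfl | hn
      · simp
      · have hnR : (0:ℝ) < (n:ℝ) := by exact_mod_cast hn
        rw [Real.norm_eq_abs, abs_div, abs_of_pos hnR]
        gcongr
        exact hbound n
    · exact tendsto_const_div_atTop_nhds_zero_nat K
  have heq : ∀ᶠ n : ℕ in Filter.atTop,
      L * M + ((f (g n) : ℝ) - L * M * n) / n = (f (g n) : ℝ) / n := by
    filter_upwards [Filter.eventually_ge_atTop 1] with n hn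
    have hnR : (0:ℝ) < (n:ℝ) := by exact_mod_cast hn
    field_simp
    ring
  have := Filter.Tendsto.congr' heq (tendsto_const_nhds.add hzero)
  simpa using this
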